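/- Let V be a symplectic vector space over a field k with an s-good grading, and let Q ∈ Q(V)_2 be such that A = A_Q fails to be injective on V_{−i} → V_{−i+2} for some i ≥ 2. Then there exists B ∈ Sp(V) with Q∘B = Q which does not preserve the grading filtration (V_{≥j}); explicitly, choosing nonzero e_{−i} ∈ V_{−i} with Ae_{−i}=0 and nonzero e_{i−2} ∈ V_{i−2} with Ae_{i−2}=0, the transvection-type map B(Σ x_k) = Σ_{k≠−i,i−2} x_k + (x_{−i} + (e_{i−2},x_{−i+2})e_{−i}) + (x_{i−2} + (e_{−i},x_i)e_{i−2}) is symplectic and satisfies Q(B x) = Q(x) for all x. -/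

import Mathlib

/-- An `s`-good grading of a symplectic vector space `(V, B)`. -/
def SGood (k V : Type*) [Field k] [AddCommGroup V] [Module k V]
    (B : LinearMap.BilinForm k V) (Vg : ℤ → Submodule k V) : Prop :=
  DirectSum.IsInternal Vg ∧
  (∀ i : ℤ, 0 ≤ i →
    Module.finrank k (Vg (-i)) = Module.finrank k (Vg i) ∧
    Module.finrank k (Vg (-i - 2)) ≤ Module.finrank k (Vg (-i))) ∧
  (∀ i : ℤ, Even i → Even (Module.finrank k (Vg i))) ∧
  (∀ i j : ℤ, i + j ≠ 0 → ∀ x ∈ Vg i, ∀ y ∈ Vg j, B x y = 0)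


/-- `(V, B)` symplectic with `s`-good grading, `Q ∈ Q(V)₂`
(i.e. `A = A_Q` shifts the grading by `2` and `Q` vanishes on `V_i` for
`i ≠ -1`) such that `A : V_{-i} → V_{-i+2}` is not injective for some `i ≥ 2`.
Then there is a symplectic automorphism `g` of `V` with `Q ∘ g = Q` which does
not preserve the filtration `(V_{≥ j})`. -/
theorem exists_symplectic_fixing_Q_not_preserving_filtration
    (k V : Type*) [Field k] [AddCommGroup V] [Module k V]
    [FiniteDimensional k V]
    (B : LinearMap.BilinForm k V) (halt : B.IsAlt) (hnd : B.Nondegenerate)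
    (Vg : ℤ → Submodule k V) (hg : SGood k V B Vg)
    (Q : QuadraticForm k V) (A : Module.End k V)
    (hA : ∀ x y : V, Q (x + y) - Q x - Q y = B (A x) y)
    (hA2 : ∀ i : ℤ, ∀ x ∈ Vg i, A x ∈ Vg (i + 2))
    (hQ0 : ∀ i : ℤ, i ≠ -1 → ∀ x ∈ Vg i, Q x = 0)
    (i : ℤ) (hi : 2 ≤ i)
    (hker : ∃ x ∈ Vg (-i), x ≠ 0 ∧ A x = 0) :
    ∃ g : V ≃ₗ[k] V,
      (∀ x y : V, B (g x) (g y) = B x y) ∧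
      (∀ x : V, Q (g x) = Q x) ∧
      ∃ j : ℤ, Submodule.map g.toLinearMap (⨆ l ≥ j, Vg l) ≠ ⨆ l ≥ j, Vg l := by
  obtain ⟨e, he, hne, hAe⟩ := hker
  have hQe : Q e = 0 := hQ0 (-i) (by omega) e he
  have hBee : B e e = 0 := halt e
  have hxe : ∀ x : V, B x e = -B e x := fun x => (halt.neg_eq e x).symm
  -- symmetry of the associated bilinear map
  have hsym : ∀ x y : V, B (A x) y = B (A y) x := by
    intro x y
    have h1 := hA x y
    have h2 := hA y x
    rw [add_comm] at h2
    rw [← h1, ← h2]; ring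
  -- the transvection g x = x + (B e x) • e
  have hcomp : ∀ x : V,
      (LinearMap.id + LinearMap.smulRight (B e) e).comp
        (LinearMap.id - LinearMap.smulRight (B e) e) x = x := by
    intro x
    simp [LinearMap.smulRight_apply, map_sub, map_smul, hBee, smul_smul]
  have hcomp' : ∀ x : V,
      (LinearMap.id - LinearMap.smulRight (B e) e).comp
        (LinearMap.id + LinearMap.smulRight (B e) e) x = x := by
    intro x
    simp [LinearMap.smulRight_apply, map_add, map_smul, hBee, smul_smul]
  refine ⟨LinearEquiv.ofLinear (LinearMap.id + LinearMap.smulRight (B e) e)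
      (LinearMap.id - LinearMap.smulRight (B e) e)
      (LinearMap.ext hcomp) (LinearMap.ext hcomp'), ?_, ?_, ?_⟩
  · intro x y
    simp only [LinearEquiv.ofLinear_apply, LinearMap.add_apply, LinearMap.id_apply,
      LinearMap.smulRight_apply, map_add, map_smul, LinearMap.add_apply, LinearMap.smul_apply, smul_eq_mul,
      hBee, hxe]
    ring
  · intro x
    have h := hA x ((B e x) • e)
    have hAxe : B (A x) e = 0 := by rw [hsym, hAe]; simp
    have hQs : Q ((B e x) • e) = 0 := by
      rw [QuadraticMap.map_smul, hQe]; simp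
    simp only [LinearEquiv.ofLinear_apply, LinearMap.add_apply, LinearMap.id_apply,
      LinearMap.smulRight_apply]
    rw [hQs, map_smul, hAxe] at h
    simp only [smul_zero] at h
    linear_combination h
  · -- find y ∈ Vg i with B e y ≠ 0
    have hz : ∃ z : V, B e z ≠ 0 := by
      by_contra h
      push_neg at h
      exact hne (hnd.1 e h)
    obtain ⟨z, hz⟩ := hz
    have hzmem : z ∈ ⨆ l, Vg l := by
      rw [hg.1.submodule_iSup_eq_top]; trivial
    have hy : ∃ y ∈ Vg i, B e y ≠ 0 := by
      refine Submodule.iSup_induction (motive := fun z => B e z ≠ 0 → ∃ y ∈ Vg i, B e y ≠ 0)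
        Vg hzmem ?_ ?_ ?_ hz
      · intro l x hx hBx
        rcases eq_or_ne l i with rfl | hl
        · exact ⟨x, hx, hBx⟩
        · exact absurd (hg.2.2.2 (-i) l (by omega) e he x hx) hBx
      · simp
      · intro x y hx hy hxy
        rcases eq_or_ne (B e x) 0 with h0 | h0
        · exact hy (by simpa [h0] using hxy)
        · exact hx h0
    obtain ⟨y, hyi, hBy⟩ := hy
    refine ⟨1 - i, ?_⟩
    set S : Submodule k V := ⨆ l ≥ (1 - i : ℤ), Vg l with hS
    have hyS : y ∈ S := Submodule.mem_iSup_of_mem i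
      (Submodule.mem_iSup_of_mem (by omega) hyi)
    have heS : e ∉ S := by
      intro heS
      have hdisj : Disjoint (Vg (-i)) S := by
        have := hg.1.submodule_iSupIndep.disjoint_biSup
          (x := -i) (y := {l : ℤ | l ≥ 1 - i}) (by simp)
        simpa [hS, iSup_subtype] using this
      exact hne (Submodule.disjoint_def.mp hdisj e he heS)
    intro hEq
    have hgy : y + (B e y) • e ∈ S := by
      rw [← hEq]
      exact ⟨y, hyS, by simp⟩
    have : (B e y) • e ∈ S := by
      have := Submodule.sub_mem S hgy hyS
      simpa using this
    have : e ∈ S := by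
      have h2 := Submodule.smul_mem S (B e y)⁻¹ this
      rwa [smul_smul, inv_mul_cancel₀ hBy, one_smul] at h2
    exact heS this
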